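/- Let A be a nonempty set and 1 ≤ p < ∞. Let F be a nonempty, upwards directed (in the pointwise order), family of nonnegative positively homogeneous functions f : ℓ∞(A) → ℝ, each of which is continuous on the closed unit ball of ℓ∞(A) with respect to the topology of pointwise convergence, and suppose M := sup{‖f‖_{FBL^p} : f ∈ F} < ∞. Then there exists an absolutely summable h : A → ℝ with Σ_{a∈A} |h(a)| ≤ M^p such that for every f ∈ F and every x ∈ ℓ∞(A) one has f(x) ≤ |Σ_{a∈A} h(a)·|x(a)|^p|^{1/p}. Consequently, since g(x) := |Σ_{a∈A} h(a)·|x(a)|^p|^{1/p} satisfies ‖g‖_{FBL^p} ≤ M and belongs to the free p-convex Banach lattice FBL^(p)[ℓ₁(A)], the Banach lattice FBL^(p)[ℓ₁(A)] has the strong Nakano property. -/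

import Mathlib

open scoped ENNReal

set_option maxHeartbeats 1000000
set_option synthInstance.maxHeartbeats 400000
set_option linter.unusedSectionVars false

/-- `‖f‖_{FBL^p}` for a function `f : ℓ∞(A) → ℝ` (with `ℓ∞(A)` realized as the dual of
`ℓ₁(A)`), with values in `[0,∞]`. -/
noncomputable def fblNormP (A : Type*) (p : ℝ) (f : lp (fun _ : A => ℝ) ∞ → ℝ) : ℝ≥0∞ :=
  ⨆ (m : ℕ) (x : Fin m → lp (fun _ : A => ℝ) ∞) (_ : ∀ a : A, ∑ i, |x i a| ^ p ≤ 1),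
    ENNReal.ofReal ((∑ i, |f (x i)| ^ p) ^ (1 / p))

/-- The closed unit ball of `ℓ∞(A)`, equipped with the topology of pointwise convergence
(equivalently, the weak* topology from the identification `ℓ∞(A) = ℓ₁(A)*`). -/
def ballPtwise (A : Type*) : Type _ := {x : lp (fun _ : A => ℝ) ∞ // ‖x‖ ≤ 1}

instance (A : Type*) : TopologicalSpace (ballPtwise A) :=
  TopologicalSpace.induced (fun x : ballPtwise A => (x.1 : ∀ _ : A, ℝ)) Pi.topologicalSpace

namespace NkAux

lemma rpow_invp {p : ℝ} (hp : 0 < p) {c : ℝ} (hc : 0 ≤ c) : (c ^ (1/p)) ^ p = c := by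
  rw [← Real.rpow_mul hc, one_div_mul_cancel hp.ne', Real.rpow_one]

lemma rpow_pinv {p : ℝ} (hp : 0 < p) {c : ℝ} (hc : 0 ≤ c) : (c ^ p) ^ (1/p) = c := by
  rw [← Real.rpow_mul hc, mul_one_div_cancel hp.ne', Real.rpow_one]

lemma list_sum_map_eq_fin {β : Type*} (G : β → ℝ) (l : List β) :
    (l.map G).sum = ∑ i : Fin l.length, G (l.get i) := by
  calc (l.map G).sum = ((List.ofFn l.get).map G).sum := by rw [List.ofFn_get]
    _ = (List.ofFn (G ∘ l.get)).sum := by rw [List.map_ofFn]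
    _ = ∑ i : Fin l.length, G (l.get i) := by rw [List.sum_ofFn]; rfl

lemma directed_list_bound {β : Type*} [Preorder β] {F : Set β} (hne : F.Nonempty)
    (hdir : DirectedOn (· ≤ ·) F) :
    ∀ l : List β, (∀ f ∈ l, f ∈ F) → ∃ g ∈ F, ∀ f ∈ l, f ≤ g := by
  intro l
  induction l with
  | nil => exact fun _ => ⟨hne.choose, hne.choose_spec, by simp⟩
  | cons hd tl ih =>
    intro hl
    obtain ⟨g0, hg0F, hg0⟩ := ih fun f hf => hl f (List.mem_cons_of_mem _ hf)
    obtain ⟨g, hgF, hg1, hg2⟩ := hdir hd (hl hd (List.mem_cons_self)) g0 hg0F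
    exact ⟨g, hgF, fun f hf => by
      rcases List.mem_cons.mp hf with rfl | hf
      · exact hg1
      · exact (hg0 f hf).trans hg2⟩

variable {A : Type*} [Nonempty A] {p : ℝ} {F : Set (lp (fun _ : A => ℝ) ∞ → ℝ)} {Mp : ℝ}

/-- The key bound: any admissible list with column `p`-sums bounded by `c` has value
sum bounded by `c * Mp`. -/
lemma list_value_bound (hp : 0 < p) (hne : F.Nonempty) (hdir : DirectedOn (· ≤ ·) F)
    (hF1 : ∀ f ∈ F, ∀ x, 0 ≤ f x)
    (hF2 : ∀ f ∈ F, ∀ t : ℝ, 0 ≤ t → ∀ x, f (t • x) = t * f x)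
    (hMp : ∀ f ∈ F, ∀ (m : ℕ) (x : Fin m → lp (fun _ : A => ℝ) ∞),
      (∀ a : A, ∑ i, |x i a| ^ p ≤ 1) → ∑ i, |f (x i)| ^ p ≤ Mp)
    (l : List ((lp (fun _ : A => ℝ) ∞) × ((lp (fun _ : A => ℝ) ∞) → ℝ)))
    (hl : ∀ pr ∈ l, pr.2 ∈ F) {c : ℝ} (hc : 0 ≤ c)
    (hlc : ∀ a : A, (l.map fun pr => |pr.1 a| ^ p).sum ≤ c) :
    (l.map fun pr => pr.2 pr.1 ^ p).sum ≤ c * Mp := by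
  obtain ⟨g, hgF, hg⟩ := directed_list_bound hne hdir (l.map Prod.snd)
    (fun f hf => by obtain ⟨pr, hpr, rfl⟩ := List.mem_map.mp hf; exact hl pr hpr)
  have hg' : ∀ pr ∈ l, pr.2 ≤ g := fun pr hpr => hg pr.2 (List.mem_map_of_mem hpr)
  -- step 1 : bound by g
  have step1 : (l.map fun pr => pr.2 pr.1 ^ p).sum ≤ (l.map fun pr => g pr.1 ^ p).sum := by
    apply List.sum_le_sum
    intro pr hpr
    exact Real.rpow_le_rpow (hF1 pr.2 (hl pr hpr) pr.1) (hg' pr hpr pr.1) hp.le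
  refine step1.trans ?_
  rcases eq_or_lt_of_le hc with hc0 | hc0
  · -- c = 0 : all entries vanish
    have hzero : ∀ pr ∈ l, g pr.1 ^ p = 0 := by
      intro pr hpr
      have hx0 : pr.1 = 0 := by
        ext a
        have hmem : |pr.1 a| ^ p ∈ l.map fun pr => |pr.1 a| ^ p :=
          List.mem_map_of_mem hpr
        have h1 : |pr.1 a| ^ p ≤ (l.map fun pr => |pr.1 a| ^ p).sum :=
          List.single_le_sum (fun r hr => by
            obtain ⟨pr', _, rfl⟩ := List.mem_map.mp hr
            exact Real.rpow_nonneg (abs_nonneg _) p) _ hmem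
        have h2 : |pr.1 a| ^ p ≤ 0 := h1.trans (hc0 ▸ hlc a)
        have h3 : |pr.1 a| ^ p = 0 :=
          le_antisymm h2 (Real.rpow_nonneg (abs_nonneg _) p)
        have := (Real.rpow_eq_zero (abs_nonneg _) hp.ne').mp h3
        simpa using this
      have hg0 : g (0 : lp (fun _ : A => ℝ) ∞) = 0 := by
        have := hF2 g hgF 0 le_rfl 0
        simpa using this
      rw [hx0, hg0, Real.zero_rpow hp.ne']
    have : (l.map fun pr => g pr.1 ^ p).sum = 0 := by
      apply List.sum_eq_zero
      intro r hr
      obtain ⟨pr, hpr, rfl⟩ := List.mem_map.mp hr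
      exact hzero pr hpr
    rw [this, ← hc0, zero_mul]
  · -- c > 0 : rescale
    set s : ℝ := c ^ (1/p) with hs
    have hs0 : 0 < s := Real.rpow_pos_of_pos hc0 _
    have hsp : s⁻¹ ^ p = c⁻¹ := by
      rw [Real.inv_rpow hs0.le, hs, rpow_invp hp hc]
    -- rescaled tuple
    set n := l.length with hn
    set y : Fin n → lp (fun _ : A => ℝ) ∞ := fun i => s⁻¹ • (l.get i).1 with hy
    have hyval : ∀ i a, |(y i) a| ^ p = c⁻¹ * |(l.get i).1 a| ^ p := by
      intro i a
      have : (y i) a = s⁻¹ * (l.get i).1 a := rfl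
      rw [this, abs_mul, Real.mul_rpow (abs_nonneg _) (abs_nonneg _),
        abs_of_nonneg (inv_nonneg.mpr hs0.le), hsp]
    have hcons : ∀ a : A, ∑ i, |(y i) a| ^ p ≤ 1 := by
      intro a
      have := hlc a
      rw [list_sum_map_eq_fin (fun pr => |pr.1 a| ^ p) l] at this
      calc ∑ i, |(y i) a| ^ p = c⁻¹ * ∑ i, |(l.get i).1 a| ^ p := by
            rw [Finset.mul_sum]; exact Finset.sum_congr rfl fun i _ => hyval i a
        _ ≤ c⁻¹ * c := by
            exact mul_le_mul_of_nonneg_left this (inv_nonneg.mpr hc)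
        _ = 1 := inv_mul_cancel₀ hc0.ne'
    have hval : ∀ i : Fin n, g (l.get i).1 ^ p = c * |g (y i)| ^ p := by
      intro i
      have h1 : g (y i) = s⁻¹ * g (l.get i).1 := hF2 g hgF s⁻¹ (inv_nonneg.mpr hs0.le) _
      rw [abs_of_nonneg (hF1 g hgF (y i)), h1,
        Real.mul_rpow (inv_nonneg.mpr hs0.le) (hF1 g hgF _), hsp, ← mul_assoc,
        mul_inv_cancel₀ hc0.ne', one_mul]
    calc (l.map fun pr => g pr.1 ^ p).sum = ∑ i : Fin n, g (l.get i).1 ^ p :=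
          list_sum_map_eq_fin _ l
      _ = c * ∑ i, |g (y i)| ^ p := by
          rw [Finset.mul_sum]; exact Finset.sum_congr rfl fun i _ => hval i
      _ ≤ c * Mp := mul_le_mul_of_nonneg_left (hMp g hgF n y hcons) hc


/-- Hypothesis bundle. -/
structure Ctx {A : Type*} (p : ℝ) (F : Set (lp (fun _ : A => ℝ) ∞ → ℝ)) (Mp : ℝ) : Prop where
  hp : 0 < p
  hne : F.Nonempty
  hdir : DirectedOn (· ≤ ·) F
  hF1 : ∀ f ∈ F, ∀ x, 0 ≤ f x
  hF2 : ∀ f ∈ F, ∀ t : ℝ, 0 ≤ t → ∀ x, f (t • x) = t * f x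
  hMp : ∀ f ∈ F, ∀ (m : ℕ) (x : Fin m → lp (fun _ : A => ℝ) ∞),
      (∀ a : A, ∑ i, |x i a| ^ p ≤ 1) → ∑ i, |f (x i)| ^ p ≤ Mp

lemma Ctx.hMp0 (ctx : Ctx p F Mp) : 0 ≤ Mp := by
  obtain ⟨f, hf⟩ := ctx.hne
  have := ctx.hMp f hf 0 (fun i => 0) (fun a => by simp)
  simpa using this

/-- The decomposition set. -/
def nkSet (p : ℝ) (F : Set (lp (fun _ : A => ℝ) ∞ → ℝ)) (v : lp (fun _ : A => ℝ) ∞) :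
    Set ℝ :=
  {r | ∃ l : List ((lp (fun _ : A => ℝ) ∞) × ((lp (fun _ : A => ℝ) ∞) → ℝ)),
    (∀ pr ∈ l, pr.2 ∈ F) ∧ (∀ a : A, (l.map fun pr => |pr.1 a| ^ p).sum ≤ v a) ∧
    r = (l.map fun pr => pr.2 pr.1 ^ p).sum}

noncomputable def nkPsi (p : ℝ) (F : Set (lp (fun _ : A => ℝ) ∞ → ℝ))
    (v : lp (fun _ : A => ℝ) ∞) : ℝ := sSup (nkSet p F v)

omit [Nonempty A] in
lemma zero_mem_nkSet {v : lp (fun _ : A => ℝ) ∞} (hv : ∀ a, 0 ≤ v a) :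
    (0 : ℝ) ∈ nkSet p F v := ⟨[], by simp, fun a => by simpa using hv a, by simp⟩

lemma abs_apply_le_norm (v : lp (fun _ : A => ℝ) ∞) (a : A) : |v a| ≤ ‖v‖ := by
  have := lp.norm_apply_le_norm ENNReal.top_ne_zero v a
  simpa [Real.norm_eq_abs] using this

lemma nkSet_bound (ctx : Ctx p F Mp) {v : lp (fun _ : A => ℝ) ∞} {r : ℝ}
    (hr : r ∈ nkSet p F v) : r ≤ ‖v‖ * Mp := by
  obtain ⟨l, hl, hlc, rfl⟩ := hr
  exact list_value_bound ctx.hp ctx.hne ctx.hdir ctx.hF1 ctx.hF2 ctx.hMp l hl (norm_nonneg v)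
    (fun a => (hlc a).trans ((le_abs_self _).trans (abs_apply_le_norm v a)))

lemma bddAbove_nkSet (ctx : Ctx p F Mp) (v : lp (fun _ : A => ℝ) ∞) :
    BddAbove (nkSet p F v) := ⟨‖v‖ * Mp, fun _ hr => nkSet_bound ctx hr⟩

lemma nkPsi_le (ctx : Ctx p F Mp) (v : lp (fun _ : A => ℝ) ∞) :
    nkPsi p F v ≤ ‖v‖ * Mp :=
  Real.sSup_le (fun _ hr => nkSet_bound ctx hr) (mul_nonneg (norm_nonneg _) ctx.hMp0)

lemma le_nkPsi (ctx : Ctx p F Mp) {v : lp (fun _ : A => ℝ) ∞} {r : ℝ}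
    (hr : r ∈ nkSet p F v) : r ≤ nkPsi p F v := le_csSup (bddAbove_nkSet ctx v) hr

lemma nkPsi_nonneg (ctx : Ctx p F Mp) {v : lp (fun _ : A => ℝ) ∞} (hv : ∀ a, 0 ≤ v a) :
    0 ≤ nkPsi p F v := le_nkPsi ctx (zero_mem_nkSet hv)

/-- single-element membership: pointwise `p`-th power domination. -/
lemma single_le_nkPsi (ctx : Ctx p F Mp) {f : lp (fun _ : A => ℝ) ∞ → ℝ} (hf : f ∈ F)
    {x v : lp (fun _ : A => ℝ) ∞} (hx : ∀ a, |x a| ^ p ≤ v a) :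
    f x ^ p ≤ nkPsi p F v :=
  le_nkPsi ctx ⟨[(x, f)], by simpa using hf, fun a => by simpa using hx a, by simp⟩

lemma nkPsi_superadd (ctx : Ctx p F Mp) {u₁ u₂ : lp (fun _ : A => ℝ) ∞}
    (hu₁ : ∀ a, 0 ≤ u₁ a) (hu₂ : ∀ a, 0 ≤ u₂ a) :
    nkPsi p F u₁ + nkPsi p F u₂ ≤ nkPsi p F (u₁ + u₂) := by
  have hmem : ∀ r₁ ∈ nkSet p F u₁, ∀ r₂ ∈ nkSet p F u₂, r₁ + r₂ ∈ nkSet p F (u₁ + u₂) := by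
    rintro r₁ ⟨l₁, hl₁, hc₁, rfl⟩ r₂ ⟨l₂, hl₂, hc₂, rfl⟩
    refine ⟨l₁ ++ l₂, ?_, ?_, ?_⟩
    · intro pr hpr; rcases List.mem_append.mp hpr with h | h
      · exact hl₁ pr h
      · exact hl₂ pr h
    · intro a
      have : (u₁ + u₂) a = u₁ a + u₂ a := rfl
      rw [List.map_append, List.sum_append, this]
      exact add_le_add (hc₁ a) (hc₂ a)
    · rw [List.map_append, List.sum_append]
  have h1 : nkPsi p F u₁ ≤ nkPsi p F (u₁ + u₂) - nkPsi p F u₂ := by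
    apply Real.sSup_le
    · intro r₁ hr₁
      rw [le_sub_iff_add_le]
      have h2 : nkPsi p F u₂ ≤ nkPsi p F (u₁ + u₂) - r₁ := by
        apply Real.sSup_le
        · intro r₂ hr₂
          rw [le_sub_iff_add_le, add_comm]
          exact le_nkPsi ctx (hmem r₁ hr₁ r₂ hr₂)
        · have hr₁' : r₁ ≤ nkPsi p F (u₁ + u₂) :=
            le_nkPsi ctx (by simpa using hmem r₁ hr₁ 0 (zero_mem_nkSet hu₂))
          linarith
      linarith
    · have h3 : nkPsi p F u₂ ≤ nkPsi p F (u₁ + u₂) := by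
        apply Real.sSup_le
        · intro r₂ hr₂
          simpa using le_nkPsi ctx (hmem 0 (zero_mem_nkSet hu₁) r₂ hr₂)
        · exact nkPsi_nonneg ctx fun a => by
            have : (u₁ + u₂) a = u₁ a + u₂ a := rfl
            rw [this]; exact add_nonneg (hu₁ a) (hu₂ a)
      linarith
  linarith

lemma smul_mem_nkSet (ctx : Ctx p F Mp) {c : ℝ} (hc : 0 < c) {v : lp (fun _ : A => ℝ) ∞}
    {r : ℝ} (hr : r ∈ nkSet p F v) : c * r ∈ nkSet p F (c • v) := by
  obtain ⟨l, hl, hlc, rfl⟩ := hr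
  set s : ℝ := c ^ (1/p) with hs
  have hs0 : 0 < s := Real.rpow_pos_of_pos hc _
  have hsp : s ^ p = c := rpow_invp ctx.hp hc.le
  refine ⟨l.map fun pr => (s • pr.1, pr.2), ?_, ?_, ?_⟩
  · intro pr hpr
    obtain ⟨pr', hpr', rfl⟩ := List.mem_map.mp hpr
    exact hl pr' hpr'
  · intro a
    rw [List.map_map]
    have heq : (l.map ((fun pr : (lp (fun _ : A => ℝ) ∞) × ((lp (fun _ : A => ℝ) ∞) → ℝ) => |pr.1 a| ^ p) ∘ (fun pr =>
        ((s • pr.1 : lp (fun _ : A => ℝ) ∞), pr.2)))) = l.map fun pr => c * |pr.1 a| ^ p := by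
      apply List.map_congr_left
      intro pr _
      show |(s • pr.1) a| ^ p = c * |pr.1 a| ^ p
      have : (s • pr.1) a = s * pr.1 a := rfl
      rw [this, abs_mul, Real.mul_rpow (abs_nonneg _) (abs_nonneg _),
        abs_of_nonneg hs0.le, hsp]
    rw [heq, List.sum_map_mul_left]
    have : (c • v) a = c * v a := rfl
    rw [this]
    exact mul_le_mul_of_nonneg_left (hlc a) hc.le
  · rw [List.map_map]
    have heq : (l.map ((fun pr : (lp (fun _ : A => ℝ) ∞) × ((lp (fun _ : A => ℝ) ∞) → ℝ) => pr.2 pr.1 ^ p) ∘ (fun pr =>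
        ((s • pr.1 : lp (fun _ : A => ℝ) ∞), pr.2)))) = l.map fun pr => c * pr.2 pr.1 ^ p := by
      apply List.map_congr_left
      intro pr hpr
      show pr.2 (s • pr.1) ^ p = c * pr.2 pr.1 ^ p
      rw [ctx.hF2 pr.2 (hl pr hpr) s hs0.le pr.1,
        Real.mul_rpow hs0.le (ctx.hF1 pr.2 (hl pr hpr) pr.1), hsp]
    rw [heq, List.sum_map_mul_left]

lemma nkPsi_smul_le (ctx : Ctx p F Mp) {c : ℝ} (hc : 0 < c) {v : lp (fun _ : A => ℝ) ∞}
    (hv : ∀ a, 0 ≤ v a) : nkPsi p F (c • v) ≤ c * nkPsi p F v := by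
  apply csSup_le ⟨0, zero_mem_nkSet fun a => by
    have : (c • v) a = c * v a := rfl
    rw [this]; exact mul_nonneg hc.le (hv a)⟩
  intro r hr
  have h1 : c⁻¹ * r ∈ nkSet p F (c⁻¹ • c • v) := smul_mem_nkSet ctx (by positivity) hr
  rw [smul_smul, inv_mul_cancel₀ hc.ne', one_smul] at h1
  have h2 : c⁻¹ * r ≤ nkPsi p F v := le_nkPsi ctx h1
  calc r = c * (c⁻¹ * r) := by field_simp
    _ ≤ c * nkPsi p F v := mul_le_mul_of_nonneg_left h2 hc.le

lemma nkPsi_smul (ctx : Ctx p F Mp) {c : ℝ} (hc : 0 < c) {v : lp (fun _ : A => ℝ) ∞}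
    (hv : ∀ a, 0 ≤ v a) : nkPsi p F (c • v) = c * nkPsi p F v := by
  refine le_antisymm (nkPsi_smul_le ctx hc hv) ?_
  have hcv : ∀ a, 0 ≤ (c • v) a := fun a => by
    have : (c • v) a = c * v a := rfl
    rw [this]; exact mul_nonneg hc.le (hv a)
  have := nkPsi_smul_le ctx (c := c⁻¹) (by positivity) hcv
  rw [smul_smul, inv_mul_cancel₀ hc.ne', one_smul] at this
  calc c * nkPsi p F v ≤ c * (c⁻¹ * nkPsi p F (c • v)) := mul_le_mul_of_nonneg_left this hc.le
    _ = nkPsi p F (c • v) := by field_simp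

/-- the constant-one element of `ℓ∞(A)` -/
noncomputable def nkOne (A : Type*) : lp (fun _ : A => ℝ) ∞ := 1

lemma nkOne_apply (a : A) : (nkOne A) a = 1 :=
  congrFun (lp.infty_coeFn_one (B := fun _ : A => ℝ)) a

lemma norm_nkOne : ‖nkOne (A := A)‖ = 1 := norm_one

/-- decomposition set for the sublinear functional -/
def nkD (p : ℝ) (F : Set (lp (fun _ : A => ℝ) ∞ → ℝ)) (Mp : ℝ)
    (v : lp (fun _ : A => ℝ) ∞) : Set ℝ :=
  {r | ∃ lam : ℝ, ∃ u : lp (fun _ : A => ℝ) ∞, 0 ≤ lam ∧ (∀ a, 0 ≤ u a) ∧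
    lam • nkOne A - u = v ∧ r = lam * Mp - nkPsi p F u}

noncomputable def nkQ (p : ℝ) (F : Set (lp (fun _ : A => ℝ) ∞ → ℝ)) (Mp : ℝ)
    (v : lp (fun _ : A => ℝ) ∞) : ℝ := sInf (nkD p F Mp v)

lemma nkD_nonempty (v : lp (fun _ : A => ℝ) ∞) : (nkD p F Mp v).Nonempty := by
  refine ⟨‖v‖ * Mp - nkPsi p F (‖v‖ • nkOne A - v), ‖v‖, ‖v‖ • nkOne A - v,
    norm_nonneg v, ?_, by abel, rfl⟩
  intro a
  have : (‖v‖ • nkOne A - v) a = ‖v‖ * (nkOne A) a - v a := rfl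
  rw [this, nkOne_apply, mul_one, sub_nonneg]
  exact (le_abs_self _).trans (abs_apply_le_norm v a)

lemma nkD_lb (ctx : Ctx p F Mp) {v : lp (fun _ : A => ℝ) ∞} {r : ℝ}
    (hr : r ∈ nkD p F Mp v) : -(‖v‖ * Mp) ≤ r := by
  obtain ⟨lam, u, hlam, hu, hvu, rfl⟩ := hr
  have hnu : ‖u‖ ≤ lam + ‖v‖ := by
    have : u = lam • nkOne A - v := by rw [← hvu]; abel
    rw [this]
    calc ‖lam • nkOne A - v‖ ≤ ‖lam • nkOne A‖ + ‖v‖ := norm_sub_le _ _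
      _ = lam + ‖v‖ := by rw [norm_smul, norm_nkOne, Real.norm_eq_abs,
        abs_of_nonneg hlam, mul_one]
  have h1 : nkPsi p F u ≤ (lam + ‖v‖) * Mp :=
    (nkPsi_le ctx u).trans (mul_le_mul_of_nonneg_right hnu ctx.hMp0)
  nlinarith [ctx.hMp0]

lemma bddBelow_nkD (ctx : Ctx p F Mp) (v : lp (fun _ : A => ℝ) ∞) :
    BddBelow (nkD p F Mp v) := ⟨-(‖v‖ * Mp), fun _ hr => nkD_lb ctx hr⟩

lemma nkQ_le (ctx : Ctx p F Mp) {v : lp (fun _ : A => ℝ) ∞} {r : ℝ}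
    (hr : r ∈ nkD p F Mp v) : nkQ p F Mp v ≤ r := csInf_le (bddBelow_nkD ctx v) hr

lemma nkQ_zero_nonneg (ctx : Ctx p F Mp) : 0 ≤ nkQ p F Mp 0 := by
  apply le_csInf (nkD_nonempty 0)
  rintro r ⟨lam, u, hlam, hu, hvu, rfl⟩
  have hueq : u = lam • nkOne A := (sub_eq_zero.mp hvu).symm
  have h1 : nkPsi p F u ≤ lam * Mp := by
    have h := nkPsi_le ctx u
    have hnorm : ‖u‖ = lam := by
      rw [hueq, norm_smul, norm_nkOne, Real.norm_eq_abs, abs_of_nonneg hlam, mul_one]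
    rwa [hnorm] at h
  linarith

lemma nkQ_add (ctx : Ctx p F Mp) (v₁ v₂ : lp (fun _ : A => ℝ) ∞) :
    nkQ p F Mp (v₁ + v₂) ≤ nkQ p F Mp v₁ + nkQ p F Mp v₂ := by
  have key : ∀ r₁ ∈ nkD p F Mp v₁, ∀ r₂ ∈ nkD p F Mp v₂,
      nkQ p F Mp (v₁ + v₂) ≤ r₁ + r₂ := by
    rintro r₁ ⟨lam₁, u₁, hlam₁, hu₁, hvu₁, rfl⟩ r₂ ⟨lam₂, u₂, hlam₂, hu₂, hvu₂, rfl⟩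
    have hmem : (lam₁ + lam₂) * Mp - nkPsi p F (u₁ + u₂) ∈ nkD p F Mp (v₁ + v₂) := by
      refine ⟨lam₁ + lam₂, u₁ + u₂, by linarith, ?_, ?_, rfl⟩
      · intro a
        have : (u₁ + u₂) a = u₁ a + u₂ a := rfl
        rw [this]; exact add_nonneg (hu₁ a) (hu₂ a)
      · rw [add_smul, ← hvu₁, ← hvu₂]; abel
    refine (nkQ_le ctx hmem).trans ?_
    have := nkPsi_superadd ctx hu₁ hu₂
    linarith
  have step : ∀ r₁ ∈ nkD p F Mp v₁, nkQ p F Mp (v₁ + v₂) - r₁ ≤ nkQ p F Mp v₂ := by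
    intro r₁ hr₁
    apply le_csInf (nkD_nonempty v₂)
    intro r₂ hr₂
    linarith [key r₁ hr₁ r₂ hr₂]
  have step2 : nkQ p F Mp (v₁ + v₂) - nkQ p F Mp v₂ ≤ nkQ p F Mp v₁ := by
    apply le_csInf (nkD_nonempty v₁)
    intro r₁ hr₁
    linarith [step r₁ hr₁]
  linarith

lemma smul_mem_nkD (ctx : Ctx p F Mp) {c : ℝ} (hc : 0 < c) {v : lp (fun _ : A => ℝ) ∞}
    {r : ℝ} (hr : r ∈ nkD p F Mp v) : c * r ∈ nkD p F Mp (c • v) := by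
  obtain ⟨lam, u, hlam, hu, hvu, rfl⟩ := hr
  refine ⟨c * lam, c • u, by positivity, ?_, ?_, ?_⟩
  · intro a
    have : (c • u) a = c * u a := rfl
    rw [this]; exact mul_nonneg hc.le (hu a)
  · rw [← hvu, smul_sub, smul_smul]
  · rw [nkPsi_smul ctx hc hu]; ring

lemma nkQ_smul (ctx : Ctx p F Mp) {c : ℝ} (hc : 0 < c) (v : lp (fun _ : A => ℝ) ∞) :
    nkQ p F Mp (c • v) = c * nkQ p F Mp v := by
  have hhalf : ∀ {c : ℝ}, 0 < c → ∀ w : lp (fun _ : A => ℝ) ∞,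
      nkQ p F Mp (c • w) ≤ c * nkQ p F Mp w := by
    intro c hc w
    have h1 : ∀ r ∈ nkD p F Mp w, nkQ p F Mp (c • w) ≤ c * r :=
      fun r hr => nkQ_le ctx (smul_mem_nkD ctx hc hr)
    have h2 : c⁻¹ * nkQ p F Mp (c • w) ≤ nkQ p F Mp w := by
      apply le_csInf (nkD_nonempty w)
      intro r hr
      have := h1 r hr
      rw [inv_mul_le_iff₀ hc]
      linarith [h1 r hr]
    calc nkQ p F Mp (c • w) = c * (c⁻¹ * nkQ p F Mp (c • w)) := by field_simp
      _ ≤ c * nkQ p F Mp w := mul_le_mul_of_nonneg_left h2 hc.le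
  refine le_antisymm (hhalf hc v) ?_
  have := hhalf (c := c⁻¹) (by positivity) (c • v)
  rw [smul_smul, inv_mul_cancel₀ hc.ne', one_smul] at this
  calc c * nkQ p F Mp v ≤ c * (c⁻¹ * nkQ p F Mp (c • v)) := mul_le_mul_of_nonneg_left this hc.le
    _ = nkQ p F Mp (c • v) := by field_simp

/-- Hahn–Banach: a linear functional dominated by `nkQ`. -/
lemma exists_lin (ctx : Ctx p F Mp) :
    ∃ g : (lp (fun _ : A => ℝ) ∞) →ₗ[ℝ] ℝ, ∀ v, g v ≤ nkQ p F Mp v := by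
  obtain ⟨g, -, hg⟩ := exists_extension_of_le_sublinear
    (⟨⊥, 0⟩ : (lp (fun _ : A => ℝ) ∞) →ₗ.[ℝ] ℝ) (nkQ p F Mp)
    (fun c hc x => nkQ_smul ctx hc x)
    (fun x y => nkQ_add ctx x y)
    (fun x => by
      have hx0 : (x : lp (fun _ : A => ℝ) ∞) = 0 := (Submodule.mem_bot ℝ).mp x.2
      show (0 : _ →ₗ[ℝ] ℝ) x ≤ nkQ p F Mp (x : lp (fun _ : A => ℝ) ∞)
      rw [hx0]
      simpa using nkQ_zero_nonneg ctx)
  exact ⟨g, hg⟩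

end NkAux
namespace NkAux2
open NkAux
variable {A : Type*} [Nonempty A] {p : ℝ} {F : Set (lp (fun _ : A => ℝ) ∞ → ℝ)} {Mp : ℝ}

section Trunc
variable [DecidableEq A]

/-- finite sums of coordinate vectors -/
noncomputable def finsum (c : A → ℝ) (S : Finset A) : lp (fun _ : A => ℝ) ∞ :=
  ∑ a ∈ S, c a • lp.single (E := fun _ : A => ℝ) ∞ a 1

lemma finsum_apply (c : A → ℝ) (S : Finset A) (b : A) :
    (finsum c S) b = if b ∈ S then c b else 0 := by
  have h1 : (finsum c S) b = ∑ a ∈ S, (c a • lp.single (E := fun _ : A => ℝ) ∞ a 1) b := by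
    rw [finsum, lp.coeFn_sum]
    simp
  rw [h1]
  have h2 : ∀ a ∈ S, (c a • lp.single (E := fun _ : A => ℝ) ∞ a 1) b
      = if b = a then c a else 0 := by
    intro a _
    have : (c a • lp.single (E := fun _ : A => ℝ) ∞ a 1) b
        = c a * (lp.single (E := fun _ : A => ℝ) ∞ a 1) b := rfl
    rw [this, lp.single_apply]
    split <;> simp_all
  rw [Finset.sum_congr rfl h2]
  simp [Finset.sum_ite_eq]

/-- truncation of `x` to a finite set -/
noncomputable def trunc (x : lp (fun _ : A => ℝ) ∞) (S : Finset A) :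
    lp (fun _ : A => ℝ) ∞ := finsum (fun a => x a) S

lemma trunc_apply (x : lp (fun _ : A => ℝ) ∞) (S : Finset A) (b : A) :
    (trunc x S) b = if b ∈ S then x b else 0 := finsum_apply _ S b

lemma trunc_norm_le (x : lp (fun _ : A => ℝ) ∞) (S : Finset A) : ‖trunc x S‖ ≤ ‖x‖ := by
  rw [lp.norm_eq_ciSup]
  apply ciSup_le
  intro a
  rw [Real.norm_eq_abs, trunc_apply]
  split
  · exact abs_apply_le_norm x a
  · simpa using norm_nonneg x

/-- inclusion into the ball -/
def toBall {A : Type*} (x : lp (fun _ : A => ℝ) ∞) (hx : ‖x‖ ≤ 1) : ballPtwise A := ⟨x, hx⟩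

lemma tendsto_trunc (x : lp (fun _ : A => ℝ) ∞) (hx : ‖x‖ ≤ 1) :
    Filter.Tendsto (fun S : Finset A => toBall (trunc x S) ((trunc_norm_le x S).trans hx))
      Filter.atTop (nhds (toBall x hx)) := by
  have hind : Topology.IsInducing (fun z : ballPtwise A => (z.1 : ∀ _ : A, ℝ)) := ⟨rfl⟩
  apply hind.tendsto_nhds_iff.mpr
  rw [tendsto_pi_nhds]
  intro b
  apply Filter.Tendsto.congr' (f₁ := fun _ => x b)
  · filter_upwards [Filter.eventually_ge_atTop ({b} : Finset A)] with S hS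
    have hb : b ∈ S := hS (Finset.mem_singleton_self b)
    show x b = (trunc x S) b
    rw [trunc_apply, if_pos hb]
  · exact tendsto_const_nhds

end Trunc
section Main
variable [DecidableEq A]

lemma single_apply' (a b : A) (r : ℝ) :
    (lp.single (E := fun _ : A => ℝ) ∞ a r) b = if b = a then r else 0 := by
  rw [lp.single_apply]; split <;> simp_all

/-- The main construction: a summable nonnegative weight dominating the family. -/
lemma nk_main (ctx : Ctx p F Mp)
    (hF3 : ∀ f ∈ F, Continuous fun z : ballPtwise A => f z.1) :
    ∃ h : A → ℝ, (∀ a, 0 ≤ h a) ∧ Summable h ∧ (∑' a, h a) ≤ Mp ∧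
      ∀ f ∈ F, ∀ x : lp (fun _ : A => ℝ) ∞,
        f x ≤ (∑' a, h a * |x a| ^ p) ^ (1/p) := by
  obtain ⟨g, hg⟩ := exists_lin ctx
  have hgPsi : ∀ u : lp (fun _ : A => ℝ) ∞, (∀ a, 0 ≤ u a) → nkPsi p F u ≤ g u := by
    intro u hu
    have h1 : g (-u) ≤ nkQ p F Mp (-u) := hg _
    have h2 : nkQ p F Mp (-u) ≤ -nkPsi p F u := by
      apply nkQ_le ctx
      exact ⟨0, u, le_rfl, hu, by rw [zero_smul, zero_sub], by rw [zero_mul, zero_sub]⟩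
    rw [map_neg] at h1
    linarith
  set h : A → ℝ := fun a => g (lp.single (E := fun _ : A => ℝ) ∞ a 1) with hh
  have hsapplication : ∀ a, lp.single (E := fun _ : A => ℝ) ∞ a (1:ℝ)
      = finsum (fun _ => (1:ℝ)) {a} := by
    intro a
    ext b
    rw [single_apply', finsum_apply]
    simp
  have hsnn : ∀ a b : A, (0:ℝ) ≤ (lp.single (E := fun _ : A => ℝ) ∞ a (1:ℝ)) b := by
    intro a b
    rw [single_apply']
    split <;> norm_num
  have h0 : ∀ a, 0 ≤ h a :=
    fun a => (nkPsi_nonneg ctx (hsnn a)).trans (hgPsi _ (hsnn a))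
  have hsum_bound : ∀ S : Finset A, ∑ a ∈ S, h a ≤ Mp := by
    intro S
    have hmap : ∑ a ∈ S, h a = g (finsum (fun _ => (1:ℝ)) S) := by
      rw [finsum, map_sum]
      apply Finset.sum_congr rfl
      intro a _
      rw [one_smul]
    set w := finsum (fun _ => (1:ℝ)) S with hwdef
    have hwle : ∀ b, w b ≤ 1 := by
      intro b; rw [hwdef, finsum_apply]; split <;> norm_num
    have hwnn : ∀ b, 0 ≤ w b := by
      intro b; rw [hwdef, finsum_apply]; split <;> norm_num
    have hmem : Mp - nkPsi p F (nkOne A - w) ∈ nkD p F Mp w := by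
      refine ⟨1, nkOne A - w, zero_le_one, ?_, ?_, by rw [one_mul]⟩
      · intro b
        have : (nkOne A - w) b = (nkOne A) b - w b := rfl
        rw [this, nkOne_apply, sub_nonneg]
        exact hwle b
      · rw [one_smul]; abel
    have hq : g w ≤ Mp - nkPsi p F (nkOne A - w) := (hg w).trans (nkQ_le ctx hmem)
    have hpsi_nn : 0 ≤ nkPsi p F (nkOne A - w) := by
      apply nkPsi_nonneg ctx
      intro b
      have : (nkOne A - w) b = (nkOne A) b - w b := rfl
      rw [this, nkOne_apply, sub_nonneg]
      exact hwle b
    rw [hmap]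
    linarith
  have hsummable : Summable h := summable_of_sum_le h0 hsum_bound
  have htsum : (∑' a, h a) ≤ Mp := hsummable.tsum_le_of_sum_le hsum_bound
  refine ⟨h, h0, hsummable, htsum, ?_⟩
  intro f hf x
  have termnn : ∀ (y : lp (fun _ : A => ℝ) ∞) (a : A), 0 ≤ h a * |y a| ^ p :=
    fun y a => mul_nonneg (h0 a) (Real.rpow_nonneg (abs_nonneg _) p)
  have hsumy : ∀ y : lp (fun _ : A => ℝ) ∞, Summable (fun a => h a * |y a| ^ p) := by
    intro y
    apply Summable.of_nonneg_of_le (termnn y) (fun a => ?_) (hsummable.mul_right (‖y‖ ^ p))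
    exact mul_le_mul_of_nonneg_left
      (Real.rpow_le_rpow (abs_nonneg _) (abs_apply_le_norm y a) ctx.hp.le) (h0 a)
  have key : ∀ y : lp (fun _ : A => ℝ) ∞, ‖y‖ ≤ 1 →
      f y ≤ (∑' a, h a * |y a| ^ p) ^ (1/p) := by
    intro y hy
    have claim1 : ∀ S : Finset A, f (trunc y S) ≤ (∑' a, h a * |y a| ^ p) ^ (1/p) := by
      intro S
      set w := finsum (fun a => |y a| ^ p) S with hwdef
      have hwnn : ∀ b, 0 ≤ w b := by
        intro b
        rw [hwdef, finsum_apply]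
        split
        · exact Real.rpow_nonneg (abs_nonneg _) p
        · exact le_rfl
      have hΨ : f (trunc y S) ^ p ≤ nkPsi p F w := by
        apply single_le_nkPsi ctx hf
        intro b
        rw [trunc_apply, hwdef, finsum_apply]
        split
        · exact le_rfl
        · rw [abs_zero, Real.zero_rpow ctx.hp.ne']
      have hgw : nkPsi p F w ≤ g w := hgPsi w hwnn
      have hgw2 : g w = ∑ a ∈ S, |y a| ^ p * h a := by
        rw [hwdef, finsum, map_sum]
        apply Finset.sum_congr rfl
        intro a _
        rw [map_smul, smul_eq_mul]
      have hle : ∑ a ∈ S, |y a| ^ p * h a ≤ ∑' a, h a * |y a| ^ p := by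
        calc ∑ a ∈ S, |y a| ^ p * h a = ∑ a ∈ S, h a * |y a| ^ p := by
              apply Finset.sum_congr rfl; intro a _; ring
          _ ≤ ∑' a, h a * |y a| ^ p := (hsumy y).sum_le_tsum S (fun a _ => termnn y a)
      have hfp : f (trunc y S) ^ p ≤ ∑' a, h a * |y a| ^ p := by linarith
      have hfx0 : 0 ≤ f (trunc y S) := ctx.hF1 f hf _
      calc f (trunc y S) = (f (trunc y S) ^ p) ^ (1/p) := (rpow_pinv ctx.hp hfx0).symm
        _ ≤ (∑' a, h a * |y a| ^ p) ^ (1/p) :=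
            Real.rpow_le_rpow (Real.rpow_nonneg hfx0 p) hfp
              (le_of_lt (one_div_pos.mpr ctx.hp))
    have htends : Filter.Tendsto (fun S : Finset A => f (trunc y S))
        Filter.atTop (nhds (f y)) :=
      (((hF3 f hf).tendsto (toBall y hy)).comp (tendsto_trunc y hy))
    exact le_of_tendsto htends (Filter.Eventually.of_forall claim1)
  rcases eq_or_ne x 0 with rfl | hx0
  · have hfz : f 0 = 0 := by
      have := ctx.hF2 f hf 0 le_rfl 0
      simpa using this
    rw [hfz]
    exact Real.rpow_nonneg (tsum_nonneg (termnn 0)) _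
  · have hnx : (0:ℝ) < ‖x‖ := norm_pos_iff.mpr hx0
    set c : ℝ := ‖x‖ with hc
    have hy1 : ‖(c⁻¹ • x : lp (fun _ : A => ℝ) ∞)‖ ≤ 1 := by
      rw [norm_smul, norm_inv, Real.norm_eq_abs, abs_of_nonneg hnx.le, ← hc,
        inv_mul_cancel₀ hnx.ne']
    have hkey := key (c⁻¹ • x) hy1
    have hfx : f x = c * f (c⁻¹ • x) := by
      rw [← ctx.hF2 f hf c hnx.le, smul_smul, mul_inv_cancel₀ hnx.ne', one_smul]
    have hterm : ∀ a, h a * |(c⁻¹ • x : lp (fun _ : A => ℝ) ∞) a| ^ p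
        = c⁻¹ ^ p * (h a * |x a| ^ p) := by
      intro a
      have happ : (c⁻¹ • x : lp (fun _ : A => ℝ) ∞) a = c⁻¹ * x a := rfl
      rw [happ, abs_mul, Real.mul_rpow (abs_nonneg _) (abs_nonneg _),
        abs_of_nonneg (inv_nonneg.mpr hnx.le)]
      ring
    have hts : (∑' a, h a * |(c⁻¹ • x : lp (fun _ : A => ℝ) ∞) a| ^ p)
        = c⁻¹ ^ p * ∑' a, h a * |x a| ^ p := by
      rw [tsum_congr hterm, tsum_mul_left]
    rw [hts] at hkey
    have hsplit : (c⁻¹ ^ p * ∑' a, h a * |x a| ^ p) ^ (1/p)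
        = c⁻¹ * (∑' a, h a * |x a| ^ p) ^ (1/p) := by
      rw [Real.mul_rpow (Real.rpow_nonneg (inv_nonneg.mpr hnx.le) p)
        (tsum_nonneg (termnn x)), rpow_pinv ctx.hp (inv_nonneg.mpr hnx.le)]
    rw [hsplit] at hkey
    calc f x = c * f (c⁻¹ • x) := hfx
      _ ≤ c * (c⁻¹ * (∑' a, h a * |x a| ^ p) ^ (1/p)) :=
          mul_le_mul_of_nonneg_left hkey hnx.le
      _ = (∑' a, h a * |x a| ^ p) ^ (1/p) := by
          rw [← mul_assoc, mul_inv_cancel₀ hnx.ne', one_mul]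

end Main

end NkAux2


/-- **Theorem (strong Nakano property of `FBL^(p)[ℓ₁(A)]`).** Let `F` be a nonempty upwards
directed family of nonnegative, positively homogeneous functions on `ℓ∞(A)`, each continuous
on the unit ball for the topology of pointwise convergence (as all elements of
`FBL^(p)[ℓ₁(A)]` are), with `M := sup_{f∈F} ‖f‖_{FBL^p} < ∞`. Then there is an absolutely
summable `h : A → ℝ` with `Σ_a |h(a)| ≤ M^p` such that
`g(x) := |Σ_a h(a)|x(a)|^p|^{1/p}` dominates every `f ∈ F` pointwise; moreover
`‖g‖_{FBL^p} ≤ M`, so that `FBL^(p)[ℓ₁(A)]` has the strong Nakano property. -/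
theorem fblP_ell1_strongNakano
    (A : Type*) [Nonempty A] (p : ℝ) (hp : 1 ≤ p)
    (F : Set (lp (fun _ : A => ℝ) ∞ → ℝ)) (hne : F.Nonempty)
    (hdir : DirectedOn (· ≤ ·) F)
    (hprop : ∀ f ∈ F, (∀ x, 0 ≤ f x) ∧
      (∀ t : ℝ, 0 ≤ t → ∀ x, f (t • x) = t * f x) ∧
      Continuous fun x : ballPtwise A => f x.1)
    (hfin : (⨆ f ∈ F, fblNormP A p f) ≠ ⊤) :
    ∃ h : A → ℝ, (Summable fun a => |h a|) ∧
      (∑' a : A, |h a|) ≤ (⨆ f ∈ F, fblNormP A p f).toReal ^ p ∧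
      (∀ f ∈ F, ∀ x : lp (fun _ : A => ℝ) ∞,
        f x ≤ |∑' a : A, h a * |x a| ^ p| ^ (1 / p)) ∧
      fblNormP A p (fun x => |∑' a : A, h a * |x a| ^ p| ^ (1 / p)) ≤
        ⨆ f ∈ F, fblNormP A p f := by
  classical
  have hp0 : (0:ℝ) < p := lt_of_lt_of_le zero_lt_one hp
  set S : ℝ≥0∞ := ⨆ f ∈ F, fblNormP A p f with hS
  set M : ℝ := S.toReal with hM
  have hM0 : 0 ≤ M := ENNReal.toReal_nonneg
  set Mp : ℝ := M ^ p with hMpdef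
  have hMpbound : ∀ f ∈ F, ∀ (m : ℕ) (x : Fin m → lp (fun _ : A => ℝ) ∞),
      (∀ a : A, ∑ i, |x i a| ^ p ≤ 1) → ∑ i, |f (x i)| ^ p ≤ Mp := by
    intro f hf m x hx
    have h1 : ENNReal.ofReal ((∑ i, |f (x i)| ^ p) ^ (1/p)) ≤ fblNormP A p f := by
      apply le_iSup_of_le m
      apply le_iSup_of_le x
      exact le_iSup_of_le hx le_rfl
    have h2 : fblNormP A p f ≤ S := le_biSup _ hf
    have h3 : ((∑ i, |f (x i)| ^ p) ^ (1/p)) ≤ M :=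
      (ENNReal.ofReal_le_iff_le_toReal hfin).mp (h1.trans h2)
    have hsum0 : 0 ≤ ∑ i, |f (x i)| ^ p :=
      Finset.sum_nonneg fun i _ => Real.rpow_nonneg (abs_nonneg _) p
    calc ∑ i, |f (x i)| ^ p = ((∑ i, |f (x i)| ^ p) ^ (1/p)) ^ p :=
          (NkAux.rpow_invp hp0 hsum0).symm
      _ ≤ M ^ p := Real.rpow_le_rpow (Real.rpow_nonneg hsum0 _) h3 hp0.le
  have ctx : NkAux.Ctx p F Mp := ⟨hp0, hne, hdir, fun f hf => (hprop f hf).1,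
    fun f hf => (hprop f hf).2.1, hMpbound⟩
  obtain ⟨h, h0, hsum, htsum, hdom⟩ := NkAux2.nk_main ctx (fun f hf => (hprop f hf).2.2)
  have habs : (fun a : A => |h a|) = h := funext fun a => abs_of_nonneg (h0 a)
  have termnn : ∀ (y : lp (fun _ : A => ℝ) ∞) (a : A), 0 ≤ h a * |y a| ^ p :=
    fun y a => mul_nonneg (h0 a) (Real.rpow_nonneg (abs_nonneg _) p)
  have hT0 : ∀ y : lp (fun _ : A => ℝ) ∞, 0 ≤ ∑' a, h a * |y a| ^ p :=
    fun y => tsum_nonneg (termnn y)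
  have hsumy : ∀ y : lp (fun _ : A => ℝ) ∞, Summable (fun a => h a * |y a| ^ p) := by
    intro y
    apply Summable.of_nonneg_of_le (termnn y) (fun a => ?_) (hsum.mul_right (‖y‖ ^ p))
    exact mul_le_mul_of_nonneg_left
      (Real.rpow_le_rpow (abs_nonneg _) (NkAux.abs_apply_le_norm y a) hp0.le) (h0 a)
  refine ⟨h, by rw [habs]; exact hsum, ?_, ?_, ?_⟩
  · rw [habs]
    exact htsum
  · intro f hf x
    rw [abs_of_nonneg (hT0 x)]
    exact hdom f hf x
  · apply iSup_le; intro m; apply iSup_le; intro x; apply iSup_le; intro hx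
    refine le_trans (ENNReal.ofReal_le_ofReal ?_) (le_of_eq (ENNReal.ofReal_toReal hfin))
    have hsumeq : (∑ i, |(fun z : lp (fun _ : A => ℝ) ∞ =>
          |∑' a : A, h a * |z a| ^ p| ^ (1 / p)) (x i)| ^ p)
        = ∑ i, ∑' a : A, h a * |x i a| ^ p := by
      apply Finset.sum_congr rfl
      intro i _
      show |(|∑' a : A, h a * |x i a| ^ p|) ^ (1 / p)| ^ p = _
      rw [abs_of_nonneg (Real.rpow_nonneg (abs_nonneg _) _), abs_of_nonneg (hT0 (x i)),
        NkAux.rpow_invp hp0 (hT0 (x i))]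
    rw [hsumeq]
    have hTsum : ∑ i, (∑' a : A, h a * |x i a| ^ p) ≤ Mp := by
      have hswap : ∑' (a : A), ∑ i, h a * |x i a| ^ p = ∑ i, ∑' (a : A), h a * |x i a| ^ p :=
        Summable.tsum_finsetSum (fun i _ => hsumy (x i))
      have hle : ∑' (a : A), ∑ i, h a * |x i a| ^ p ≤ ∑' a, h a := by
        apply (summable_sum (fun i _ => hsumy (x i))).tsum_le_tsum _ hsum
        intro a
        calc ∑ i, h a * |x i a| ^ p = h a * ∑ i, |x i a| ^ p := by rw [Finset.mul_sum]
          _ ≤ h a * 1 := mul_le_mul_of_nonneg_left (hx a) (h0 a)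
          _ = h a := mul_one _
      rw [hswap] at hle
      exact hle.trans htsum
    have hnn : 0 ≤ ∑ i, ∑' a : A, h a * |x i a| ^ p :=
      Finset.sum_nonneg fun i _ => hT0 (x i)
    calc ((∑ i, ∑' a : A, h a * |x i a| ^ p) ^ (1/p)) ≤ Mp ^ (1/p) :=
          Real.rpow_le_rpow hnn hTsum (one_div_pos.mpr hp0).le
      _ = M := by rw [hMpdef, NkAux.rpow_pinv hp0 hM0]
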